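/- For all natural numbers n, k and every natural number m ≥ 1: S^{c,d}_{s,q}[n+m, k] = Σ_{r=0}^{n} Σ_{j=0}^{m} S^{c,d}_{s,q}[m,j] · q^{r(d + mc + (m−j)(s−1))} · binom(n,r)_{q^{c+s−1}} · S^{c,0}_{s,q}[r, k−j] · Π_{i=0}^{n−r−1} [d + mc + (m−j)(s−1) + (c+s−1)·i]_q, where S^{c,0}_{s,q}[r, k−j] is interpreted as 0 when j > k. -/
import Mathlib

noncomputable def qBracket (q t : ℝ) : ℝ := (q ^ t - 1) / (q - 1)

open Classical in
noncomputable def qBinom (Q : ℝ) (n k : ℕ) : ℝ :=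
  if k ≤ n then
    ∑ f ∈ Finset.univ.filter (fun f : Fin (n - k) → Fin (k + 1) => Monotone f),
      Q ^ (∑ i, (f i : ℕ))
  else 0

noncomputable def genStirlingCD (c d s q : ℝ) : ℕ → ℕ → ℝ
  | 0, 0 => 1
  | 0, _ + 1 => 0
  | _ + 1, 0 => 0
  | n + 1, k + 1 =>
    if k + 1 ≤ n + 1 then
      q ^ (c * (n : ℝ) + d + ((n : ℝ) - (k : ℝ)) * (s - 1)) * genStirlingCD c d s q n k
        + qBracket q (c * (n : ℝ) + d + ((n : ℝ) - (k : ℝ) - 1) * (s - 1)) *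
            genStirlingCD c d s q n (k + 1)
    else 0

namespace SpiveyAux

open Finset

/-! ### q-binomial lemmas -/

open Classical in
noncomputable def G (Q : ℝ) (N k : ℕ) : ℝ :=
  ∑ f ∈ Finset.univ.filter (fun f : Fin N → Fin (k + 1) => Monotone f),
    Q ^ (∑ i, (f i : ℕ))

lemma G_succ (Q : ℝ) (N k : ℕ) :
    G Q (N + 1) (k + 1) = Q ^ (N + 1) * G Q (N + 1) k + G Q N (k + 1) := by
  classical
  rw [G]
  rw [← Finset.sum_filter_add_sum_filter_not _ (fun f : Fin (N+1) → Fin (k+2) => f 0 = 0)]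
  have hB : ∑ f ∈ (Finset.univ.filter
        (fun f : Fin (N+1) → Fin (k+2) => Monotone f)).filter (fun f => f 0 = 0),
      Q ^ (∑ i, (f i : ℕ)) = G Q N (k + 1) := by
    rw [G]
    refine Finset.sum_bij' (fun f _ => f ∘ Fin.succ) (fun g _ => Fin.cons 0 g) ?_ ?_ ?_ ?_ ?_
    · intro f hf
      simp only [Finset.mem_filter, Finset.mem_univ, true_and] at hf ⊢
      exact fun a b hab => hf.1 (Fin.succ_le_succ_iff.mpr hab)
    · intro g hg
      simp only [Finset.mem_filter, Finset.mem_univ, true_and] at hg ⊢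
      constructor
      · intro a b hab
        induction a using Fin.cases with
        | zero => simp [Fin.cons_zero]
        | succ a' =>
          induction b using Fin.cases with
          | zero => exact absurd (Fin.le_zero_iff.mp hab) (Fin.succ_ne_zero a')
          | succ b' =>
            simp only [Fin.cons_succ]
            exact hg (by rwa [← Fin.succ_le_succ_iff])
      · simp
    · intro f hf
      simp only [Finset.mem_filter] at hf
      funext x
      induction x using Fin.cases with
      | zero => simp [hf.2]
      | succ x' => simp
    · intro g hg
      funext x; simp
    · intro f hf
      simp only [Finset.mem_filter] at hf
      congr 1
      rw [Fin.sum_univ_succ, hf.2]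
      simp
  have hA : ∑ f ∈ (Finset.univ.filter
        (fun f : Fin (N+1) → Fin (k+2) => Monotone f)).filter (fun f => ¬ f 0 = 0),
      Q ^ (∑ i, (f i : ℕ)) = Q ^ (N + 1) * G Q (N + 1) k := by
    rw [G, Finset.mul_sum]
    refine Finset.sum_bij' (fun f hf => fun x => (f x).pred ?_)
      (fun g _ => fun x => (g x).succ) ?_ ?_ ?_ ?_ ?_
    · simp only [Finset.mem_filter, Finset.mem_univ, true_and] at hf
      intro h0
      exact hf.2 (Fin.le_zero_iff.mp (h0 ▸ hf.1 (Fin.zero_le x)))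
    · intro f hf
      simp only [Finset.mem_filter, Finset.mem_univ, true_and] at hf ⊢
      intro a b hab
      rw [Fin.pred_le_pred_iff]
      exact hf.1 hab
    · intro g hg
      simp only [Finset.mem_filter, Finset.mem_univ, true_and] at hg ⊢
      refine ⟨fun a b hab => Fin.succ_le_succ_iff.mpr (hg hab), Fin.succ_ne_zero _⟩
    · intro f hf; funext x; simp
    · intro g hg; funext x; simp
    · intro f hf
      simp only [Finset.mem_filter, Finset.mem_univ, true_and] at hf
      have key : ∀ i : Fin (N+1), (((f i).pred
          (fun h0 => hf.2 (Fin.le_zero_iff.mp (h0 ▸ hf.1 (Fin.zero_le i)))) : ℕ) + 1)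
          = (f i : ℕ) := by
        intro i
        have h2 : ((f i) : ℕ) ≠ 0 := by
          intro hh
          exact hf.2 (Fin.le_zero_iff.mp ((Fin.ext (by simpa using hh) :
            f i = 0) ▸ hf.1 (Fin.zero_le i)))
        rw [Fin.coe_pred]; omega
      have hsum : (∑ i, (f i : ℕ)) = (N + 1) + ∑ i : Fin (N+1), ((f i).pred
          (fun h0 => hf.2 (Fin.le_zero_iff.mp (h0 ▸ hf.1 (Fin.zero_le i)))) : ℕ) := by
        calc (∑ i, (f i : ℕ)) = ∑ i : Fin (N+1), (((f i).pred
              (fun h0 => hf.2 (Fin.le_zero_iff.mp (h0 ▸ hf.1 (Fin.zero_le i)))) : ℕ) + 1) :=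
            Finset.sum_congr rfl fun i _ => (key i).symm
          _ = _ := by rw [Finset.sum_add_distrib]; simp [add_comm]
      rw [hsum, pow_add]
  rw [hB, hA]; ring

lemma qBinom_eq (Q : ℝ) {n k : ℕ} (h : k ≤ n) : qBinom Q n k = G Q (n - k) k := by
  rw [qBinom, if_pos h]; rfl

lemma qBinom_of_lt (Q : ℝ) {n k : ℕ} (h : n < k) : qBinom Q n k = 0 := by
  rw [qBinom, if_neg (by omega)]

lemma G_N_zero (Q : ℝ) (k : ℕ) : G Q 0 k = 1 := by
  rw [G, Finset.filter_true_of_mem (fun f _ => by intro a; exact absurd a.2 (by omega))]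
  simp

lemma G_zero (Q : ℝ) (N : ℕ) : G Q N 0 = 1 := by
  rw [G, Finset.filter_true_of_mem
    (fun f _ => by intro a b _; exact le_of_eq (Fin.val_injective (by omega)))]
  simp [Fin.val_eq_zero]

lemma qBinom_zero_right (Q : ℝ) (n : ℕ) : qBinom Q n 0 = 1 := by
  rw [qBinom_eq Q (Nat.zero_le n), G_zero]

lemma pascal (Q : ℝ) {n r : ℕ} (h : r ≤ n) :
    qBinom Q (n + 1) (r + 1) = Q ^ (n - r) * qBinom Q n r + qBinom Q n (r + 1) := by
  rcases eq_or_lt_of_le h with he | hlt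
  · subst he
    rw [qBinom_eq Q (le_refl (r+1)), qBinom_eq Q (le_refl r), qBinom_of_lt Q (by omega)]
    simp [G_N_zero]
  · obtain ⟨t, ht⟩ : ∃ t, n - r = t + 1 := ⟨n - r - 1, by omega⟩
    rw [qBinom_eq Q (by omega : r + 1 ≤ n + 1), qBinom_eq Q h,
      qBinom_eq Q (by omega : r + 1 ≤ n),
      (by omega : n + 1 - (r + 1) = t + 1), ht, (by omega : n - (r+1) = t)]
    exact G_succ Q t r

/-! ### Stirling lemmas -/

lemma gs_zero_of_lt (c d s q : ℝ) {n k : ℕ} (h : n < k) : genStirlingCD c d s q n k = 0 := by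
  match n, k, h with
  | 0, k + 1, _ => rfl
  | n + 1, k + 1, h => rw [genStirlingCD, if_neg (by omega)]

lemma gs_nz (c d s q : ℝ) (n : ℕ) : genStirlingCD c d s q (n + 1) 0 = 0 := rfl

lemma gs_rec (c d s q : ℝ) (n k : ℕ) : genStirlingCD c d s q (n + 1) (k + 1)
    = q ^ (c * (n : ℝ) + d + ((n : ℝ) - (k : ℝ)) * (s - 1)) * genStirlingCD c d s q n k
      + qBracket q (c * (n : ℝ) + d + ((n : ℝ) - (k : ℝ) - 1) * (s - 1)) *
          genStirlingCD c d s q n (k + 1) := by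
  by_cases h : k ≤ n
  · rw [genStirlingCD, if_pos (by omega)]
  · rw [genStirlingCD, if_neg (by omega), gs_zero_of_lt c d s q (by omega : n < k),
      gs_zero_of_lt c d s q (by omega : n < k + 1)]
    ring

lemma qBracket_zero (q : ℝ) : qBracket q 0 = 0 := by
  simp [qBracket, Real.rpow_zero]

lemma scalar_key (q s : ℝ) (hq : 0 < q) (x y u v w : ℝ)
    (hw : w = q ^ (y + (s - 1)) * u + qBracket q y * v) :
    q ^ (x + (y + (s - 1))) * u + qBracket q (x + y) * v
      = q ^ x * w + qBracket q x * v := by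
  subst hw
  rw [qBracket, qBracket, qBracket, Real.rpow_add hq, Real.rpow_add hq, Real.rpow_add hq]
  ring

noncomputable def Bg (c s q : ℝ) (k j r : ℕ) : ℝ :=
  if j ≤ k then genStirlingCD c 0 s q r (k - j) else 0

lemma Bg_rec (c s q : ℝ) (k j r : ℕ) : Bg c s q (k + 1) j (r + 1)
    = q ^ ((((c + s - 1) * (r : ℝ) - (((k + 1 - j : ℕ) : ℝ)) * (s - 1)) + (s - 1))) *
        Bg c s q k j r
      + qBracket q ((c + s - 1) * (r : ℝ) - ((k + 1 - j : ℕ) : ℝ) * (s - 1)) *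
          Bg c s q (k + 1) j r := by
  rcases lt_trichotomy j (k + 1) with h | h | h
  · have hj : j ≤ k := by omega
    rw [Bg, Bg, Bg, if_pos (by omega), if_pos hj, if_pos (by omega)]
    have h1 : k + 1 - j = (k - j) + 1 := by omega
    rw [h1, gs_rec]
    have e1 : c * (r : ℝ) + 0 + ((r : ℝ) - ((k - j : ℕ) : ℝ)) * (s - 1)
        = ((c + s - 1) * (r : ℝ) - (((k - j) + 1 : ℕ) : ℝ) * (s - 1)) + (s - 1) := by
      push_cast; ring
    have e2 : c * (r : ℝ) + 0 + ((r : ℝ) - ((k - j : ℕ) : ℝ) - 1) * (s - 1)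
        = (c + s - 1) * (r : ℝ) - (((k - j) + 1 : ℕ) : ℝ) * (s - 1) := by
      push_cast; ring
    rw [e1, e2]
  · subst h
    rw [Bg, Bg, Bg, if_pos (le_refl _), if_neg (by omega), if_pos (le_refl _)]
    rw [Nat.sub_self, gs_nz]
    cases r with
    | zero =>
      have h00 : genStirlingCD c 0 s q 0 0 = 1 := rfl
      rw [h00]
      norm_num [qBracket_zero]
    | succ r' =>
      rw [gs_nz]
      ring
  · rw [Bg, Bg, Bg, if_neg (by omega), if_neg (by omega), if_neg (by omega)]
    ring

/-! ### The summand pieces -/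

noncomputable def al (d c s : ℝ) (m j : ℕ) : ℝ :=
  d + (m : ℝ) * c + ((m : ℝ) - (j : ℝ)) * (s - 1)

noncomputable def Pp (q a b : ℝ) (l : ℕ) : ℝ :=
  ∏ i ∈ Finset.range l, qBracket q (a + b * (i : ℝ))

lemma Pp_succ (q a b : ℝ) (l : ℕ) :
    Pp q a b (l + 1) = Pp q a b l * qBracket q (a + b * (l : ℝ)) :=
  Finset.prod_range_succ _ l

noncomputable def TT (q s c d : ℝ) (m n k r j : ℕ) : ℝ :=
  genStirlingCD c d s q m j * q ^ ((r : ℝ) * al d c s m j) * qBinom (q ^ (c + s - 1)) n r *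
    Bg c s q k j r * Pp q (al d c s m j) (c + s - 1) (n - r)

noncomputable def D1 (q s c d : ℝ) (m n k r j : ℕ) : ℝ :=
  q ^ (al d c s m j + (c + s - 1) * ((n - r : ℕ) : ℝ)) *
    (genStirlingCD c d s q m j * q ^ ((r : ℝ) * al d c s m j) * qBinom (q ^ (c + s - 1)) n r *
      Pp q (al d c s m j) (c + s - 1) (n - r)) * Bg c s q k j (r + 1)

noncomputable def D2 (q s c d : ℝ) (m n k r j : ℕ) : ℝ :=
  genStirlingCD c d s q m j * q ^ ((r : ℝ) * al d c s m j) * qBinom (q ^ (c + s - 1)) n r *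
    Bg c s q k j r * Pp q (al d c s m j) (c + s - 1) ((n - r) + 1)

noncomputable def EE (q s c d : ℝ) (m n k r j : ℕ) : ℝ :=
  genStirlingCD c d s q m j * q ^ (((r + 1 : ℕ) : ℝ) * al d c s m j) *
    qBinom (q ^ (c + s - 1)) n (r + 1) *
    Bg c s q k j (r + 1) * Pp q (al d c s m j) (c + s - 1) (n - r)

/-! ### pointwise step -/

lemma pointwise (q s c d : ℝ) (hq : 0 < q) (m n k' r j : ℕ) (hr : r ≤ n) :
    q ^ (c * ((n + m : ℕ) : ℝ) + d + (((n + m : ℕ) : ℝ) - (k' : ℝ)) * (s - 1)) *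
        TT q s c d m n k' r j
      + qBracket q (c * ((n + m : ℕ) : ℝ) + d + (((n + m : ℕ) : ℝ) - (k' : ℝ) - 1) * (s - 1)) *
          TT q s c d m n (k' + 1) r j
    = D1 q s c d m n (k' + 1) r j + D2 q s c d m n (k' + 1) r j := by
  by_cases hj : j ≤ k' + 1
  · have H := scalar_key q s hq
      (al d c s m j + (c + s - 1) * ((n - r : ℕ) : ℝ))
      ((c + s - 1) * (r : ℝ) - ((k' + 1 - j : ℕ) : ℝ) * (s - 1))
      (Bg c s q k' j r) (Bg c s q (k' + 1) j r) (Bg c s q (k' + 1) j (r + 1))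
      (Bg_rec c s q k' j r)
    have hE1 : c * ((n + m : ℕ) : ℝ) + d + (((n + m : ℕ) : ℝ) - (k' : ℝ)) * (s - 1)
        = (al d c s m j + (c + s - 1) * ((n - r : ℕ) : ℝ))
          + (((c + s - 1) * (r : ℝ) - ((k' + 1 - j : ℕ) : ℝ) * (s - 1)) + (s - 1)) := by
      rw [al, Nat.cast_sub hr, Nat.cast_sub hj]
      push_cast; ring
    have hE2 : c * ((n + m : ℕ) : ℝ) + d + (((n + m : ℕ) : ℝ) - (k' : ℝ) - 1) * (s - 1)
        = (al d c s m j + (c + s - 1) * ((n - r : ℕ) : ℝ))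
          + ((c + s - 1) * (r : ℝ) - ((k' + 1 - j : ℕ) : ℝ) * (s - 1)) := by
      rw [al, Nat.cast_sub hr, Nat.cast_sub hj]
      push_cast; ring
    rw [TT, TT, D1, D2, hE1, hE2, Pp_succ]
    linear_combination (genStirlingCD c d s q m j * q ^ ((r : ℝ) * al d c s m j) *
      qBinom (q ^ (c + s - 1)) n r * Pp q (al d c s m j) (c + s - 1) (n - r)) * H
  · have b1 : Bg c s q k' j r = 0 := by rw [Bg, if_neg (by omega)]
    have b2 : ∀ r' : ℕ, Bg c s q (k' + 1) j r' = 0 := fun r' => by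
      rw [Bg, if_neg (by omega)]
    simp only [TT, D1, D2, b1, b2]
    ring

end SpiveyAux
namespace SpiveyAux

lemma tt_split (q s c d : ℝ) (hq : 0 < q) (m n k r j : ℕ) (hr : r ≤ n) :
    TT q s c d m (n + 1) k (r + 1) j = D1 q s c d m n k r j + EE q s c d m n k r j := by
  rw [TT, D1, EE, Nat.succ_sub_succ, pascal (q ^ (c + s - 1)) hr]
  have hsc : q ^ (((r + 1 : ℕ) : ℝ) * al d c s m j) * (q ^ (c + s - 1)) ^ (n - r)
      = q ^ (al d c s m j + (c + s - 1) * ((n - r : ℕ) : ℝ)) * q ^ ((r : ℝ) * al d c s m j) := by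
    rw [← Real.rpow_natCast (q ^ (c + s - 1)) (n - r), ← Real.rpow_mul hq.le,
      ← Real.rpow_add hq, ← Real.rpow_add hq]
    congr 1
    push_cast
    ring
  linear_combination (genStirlingCD c d s q m j * qBinom (q ^ (c + s - 1)) n r *
    Bg c s q k j (r + 1) * Pp q (al d c s m j) (c + s - 1) (n - r)) * hsc

lemma recombine (q s c d : ℝ) (hq : 0 < q) (m n k : ℕ) :
    ∑ r ∈ Finset.range (n + 1), ∑ j ∈ Finset.range (m + 1),
        (D1 q s c d m n k r j + D2 q s c d m n k r j)
      = ∑ r ∈ Finset.range (n + 1 + 1), ∑ j ∈ Finset.range (m + 1),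
          TT q s c d m (n + 1) k r j := by
  rw [Finset.sum_range_succ'
    (fun r => ∑ j ∈ Finset.range (m + 1), TT q s c d m (n + 1) k r j) (n + 1)]
  have hsplit : ∑ r ∈ Finset.range (n + 1), ∑ j ∈ Finset.range (m + 1),
      TT q s c d m (n + 1) k (r + 1) j
      = (∑ r ∈ Finset.range (n + 1), ∑ j ∈ Finset.range (m + 1), D1 q s c d m n k r j)
        + ∑ r ∈ Finset.range (n + 1), ∑ j ∈ Finset.range (m + 1), EE q s c d m n k r j := by
    rw [← Finset.sum_add_distrib]
    refine Finset.sum_congr rfl fun r hr => ?_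
    rw [← Finset.sum_add_distrib]
    exact Finset.sum_congr rfl fun j _ =>
      tt_split q s c d hq m n k r j (by simpa using Nat.lt_succ_iff.mp (Finset.mem_range.mp hr))
  have hEEtop : ∑ j ∈ Finset.range (m + 1), EE q s c d m n k n j = 0 :=
    Finset.sum_eq_zero fun j _ => by
      rw [EE, qBinom_of_lt _ (by omega)]; ring
  have hEE : ∑ r ∈ Finset.range (n + 1), ∑ j ∈ Finset.range (m + 1), EE q s c d m n k r j
      = ∑ r ∈ Finset.range n, ∑ j ∈ Finset.range (m + 1), D2 q s c d m n k (r + 1) j := by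
    rw [Finset.sum_range_succ, hEEtop, add_zero]
    refine Finset.sum_congr rfl fun r hr => Finset.sum_congr rfl fun j _ => ?_
    have hrn : r < n := Finset.mem_range.mp hr
    rw [EE, D2, (by omega : (n - (r + 1)) + 1 = n - r)]
  have hD2 : ∑ r ∈ Finset.range (n + 1), ∑ j ∈ Finset.range (m + 1), D2 q s c d m n k r j
      = (∑ r ∈ Finset.range n, ∑ j ∈ Finset.range (m + 1), D2 q s c d m n k (r + 1) j)
        + ∑ j ∈ Finset.range (m + 1), D2 q s c d m n k 0 j :=
    Finset.sum_range_succ' (fun r => ∑ j ∈ Finset.range (m + 1), D2 q s c d m n k r j) n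
  have hzero : ∑ j ∈ Finset.range (m + 1), TT q s c d m (n + 1) k 0 j
      = ∑ j ∈ Finset.range (m + 1), D2 q s c d m n k 0 j := by
    refine Finset.sum_congr rfl fun j _ => ?_
    rw [TT, D2, qBinom_zero_right, qBinom_zero_right,
      (by omega : n + 1 - 0 = (n - 0) + 1)]
  have lhs_split : ∑ r ∈ Finset.range (n + 1), ∑ j ∈ Finset.range (m + 1),
      (D1 q s c d m n k r j + D2 q s c d m n k r j)
      = (∑ r ∈ Finset.range (n + 1), ∑ j ∈ Finset.range (m + 1), D1 q s c d m n k r j)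
        + ∑ r ∈ Finset.range (n + 1), ∑ j ∈ Finset.range (m + 1), D2 q s c d m n k r j := by
    rw [← Finset.sum_add_distrib]
    exact Finset.sum_congr rfl fun r _ => Finset.sum_add_distrib
  rw [lhs_split, hsplit, hEE, hD2, hzero]
  ring

theorem main_aux (q s c d : ℝ) (hq : 0 < q) (m : ℕ) (hm : 1 ≤ m) :
    ∀ n k, genStirlingCD c d s q (n + m) k
      = ∑ r ∈ Finset.range (n + 1), ∑ j ∈ Finset.range (m + 1), TT q s c d m n k r j := by
  intro n
  induction n with
  | zero =>
    intro k
    rw [Nat.zero_add, Finset.sum_range_one]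
    have hterm : ∀ j ∈ Finset.range (m + 1), TT q s c d m 0 k 0 j
        = if j = k then genStirlingCD c d s q m j else 0 := by
      intro j _
      rw [TT]
      have h0 : ((0 : ℕ) : ℝ) * al d c s m j = 0 := by norm_num
      have hPp : Pp q (al d c s m j) (c + s - 1) (0 - 0) = 1 := by
        rw [(rfl : (0 : ℕ) - 0 = 0), Pp, Finset.prod_range_zero]
      rw [h0, Real.rpow_zero, qBinom_zero_right, hPp, Bg]
      by_cases hjk : j ≤ k
      · rcases eq_or_lt_of_le hjk with he | hlt
        · rw [if_pos hjk, if_pos he, he, Nat.sub_self]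
          simp only [show genStirlingCD c 0 s q 0 0 = 1 from rfl]
          ring
        · rw [if_pos hjk, if_neg (by omega : ¬ j = k)]
          obtain ⟨t, ht⟩ : ∃ t, k - j = t + 1 := ⟨k - j - 1, by omega⟩
          rw [ht]
          simp only [show genStirlingCD c 0 s q 0 (t + 1) = 0 from rfl]
          ring
      · rw [if_neg hjk, if_neg (by omega : ¬ j = k)]
        ring
    rw [Finset.sum_congr rfl hterm, Finset.sum_ite_eq' (Finset.range (m + 1)) k]
    by_cases hk : k ≤ m
    · rw [if_pos (Finset.mem_range.mpr (by omega))]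
    · rw [if_neg (by simp [Finset.mem_range]; omega), gs_zero_of_lt c d s q (by omega)]
  | succ n IH =>
    intro k
    cases k with
    | zero =>
      rw [(by omega : n + 1 + m = (n + m) + 1), gs_nz]
      symm
      refine Finset.sum_eq_zero fun r _ => Finset.sum_eq_zero fun j _ => ?_
      rw [TT]
      rcases Nat.eq_zero_or_pos j with h0 | h0
      · subst h0
        obtain ⟨m', rfl⟩ : ∃ m', m = m' + 1 := ⟨m - 1, by omega⟩
        rw [gs_nz]; ring
      · rw [Bg, if_neg (by omega)]; ring
    | succ k' =>
      rw [(by omega : n + 1 + m = (n + m) + 1), gs_rec, IH k', IH (k' + 1)]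
      calc q ^ (c * ((n + m : ℕ) : ℝ) + d + (((n + m : ℕ) : ℝ) - (k' : ℝ)) * (s - 1)) *
            (∑ r ∈ Finset.range (n + 1), ∑ j ∈ Finset.range (m + 1), TT q s c d m n k' r j)
          + qBracket q (c * ((n + m : ℕ) : ℝ) + d +
              (((n + m : ℕ) : ℝ) - (k' : ℝ) - 1) * (s - 1)) *
            (∑ r ∈ Finset.range (n + 1), ∑ j ∈ Finset.range (m + 1),
              TT q s c d m n (k' + 1) r j)
          = ∑ r ∈ Finset.range (n + 1), ∑ j ∈ Finset.range (m + 1),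
              (q ^ (c * ((n + m : ℕ) : ℝ) + d + (((n + m : ℕ) : ℝ) - (k' : ℝ)) * (s - 1)) *
                TT q s c d m n k' r j
              + qBracket q (c * ((n + m : ℕ) : ℝ) + d +
                  (((n + m : ℕ) : ℝ) - (k' : ℝ) - 1) * (s - 1)) *
                TT q s c d m n (k' + 1) r j) := by
            rw [Finset.mul_sum, Finset.mul_sum, ← Finset.sum_add_distrib]
            refine Finset.sum_congr rfl fun r _ => ?_
            rw [Finset.mul_sum, Finset.mul_sum, ← Finset.sum_add_distrib]
        _ = ∑ r ∈ Finset.range (n + 1), ∑ j ∈ Finset.range (m + 1),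
              (D1 q s c d m n (k' + 1) r j + D2 q s c d m n (k' + 1) r j) :=
            Finset.sum_congr rfl fun r hr => Finset.sum_congr rfl fun j _ =>
              pointwise q s c d hq m n k' r j (by
                have := Finset.mem_range.mp hr; omega)
        _ = ∑ r ∈ Finset.range (n + 1 + 1), ∑ j ∈ Finset.range (m + 1),
              TT q s c d m (n + 1) (k' + 1) r j := recombine q s c d hq m n (k' + 1)

end SpiveyAux

/-- Spivey-type convolution for the numbers `S^{c,d}_{s,q}[n,k]`, first form. -/
theorem spivey_cd_first (q s c d : ℝ) (hq : 0 < q) (hq1 : q ≠ 1) (n k m : ℕ) (hm : 1 ≤ m) :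
    genStirlingCD c d s q (n + m) k
    = ∑ r ∈ Finset.range (n + 1), ∑ j ∈ Finset.range (m + 1),
        genStirlingCD c d s q m j *
          q ^ ((r : ℝ) * (d + (m : ℝ) * c + ((m : ℝ) - (j : ℝ)) * (s - 1))) *
          qBinom (q ^ (c + s - 1)) n r *
          (if j ≤ k then genStirlingCD c 0 s q r (k - j) else 0) *
          ∏ i ∈ Finset.range (n - r),
            qBracket q (d + (m : ℝ) * c + ((m : ℝ) - (j : ℝ)) * (s - 1)
              + (c + s - 1) * (i : ℝ)) := by
  rw [SpiveyAux.main_aux q s c d hq m hm n k]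
  exact Finset.sum_congr rfl fun r _ => Finset.sum_congr rfl fun j _ => rfl
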